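/- Every matrix in the Ryshkov polytope R_λ with λ > 0 is positive definite: if G is a real symmetric N×N matrix with eᵀGe ≥ λ for all nonzero integer vectors e ∈ ℤ^N, then xᵀGx > 0 for all nonzero real vectors x ∈ ℝ^N. -/

import Mathlib

open Matrix

/-- The quadratic form `eᵀ G e` evaluated at an integer vector `e`. -/
def intQuadForm {N : ℕ} (G : Matrix (Fin N) (Fin N) ℝ) (e : Fin N → ℤ) : ℝ :=
  (fun i => (e i : ℝ)) ⬝ᵥ G.mulVec fun i => (e i : ℝ)

private lemma floor_eq_abs_sub_lt_one {a b : ℝ} (h : ⌊a⌋ = ⌊b⌋) : |a - b| < 1 := by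
  have ha := Int.floor_le a
  have ha' := Int.lt_floor_add_one a
  have hb := Int.floor_le b
  have hb' := Int.lt_floor_add_one b
  rw [← h] at hb hb'
  rw [abs_sub_lt_iff]
  constructor <;> linarith

/-- Simultaneous Dirichlet-type approximation (weak form, no bound on `m`). -/
private lemma simul_dirichlet {N : ℕ} (x : Fin N → ℝ) (Q : ℕ) (hQ : 0 < Q) :
    ∃ (m : ℕ) (e : Fin N → ℤ), 0 < m ∧ ∀ i, |(m : ℝ) * x i - (e i : ℝ)| < 1 / Q := by
  have key : ∀ (q : ℕ) (i : Fin N), (⌊(Q : ℝ) * Int.fract ((q : ℝ) * x i)⌋).toNat < Q := by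
    intro q i
    have h0 : (0 : ℝ) ≤ Int.fract ((q : ℝ) * x i) := Int.fract_nonneg _
    have h1 : Int.fract ((q : ℝ) * x i) < 1 := Int.fract_lt_one _
    have hQR : (0 : ℝ) < (Q : ℝ) := by exact_mod_cast hQ
    have hlt : ⌊(Q : ℝ) * Int.fract ((q : ℝ) * x i)⌋ < (Q : ℤ) := by
      apply Int.floor_lt.mpr
      push_cast
      nlinarith
    omega
  set f : Fin (Q ^ N + 1) → (Fin N → Fin Q) := fun q i =>
    ⟨(⌊(Q : ℝ) * Int.fract (((q : ℕ) : ℝ) * x i)⌋).toNat, key q i⟩ with hf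
  have hcard : Fintype.card (Fin N → Fin Q) < Fintype.card (Fin (Q ^ N + 1)) := by
    simp [Fintype.card_fun]
  obtain ⟨a, b, hne, hab⟩ := Fintype.exists_ne_map_eq_of_card_lt f hcard
  have main : ∀ a b : Fin (Q ^ N + 1), (a : ℕ) < (b : ℕ) → f a = f b →
      ∃ (m : ℕ) (e : Fin N → ℤ), 0 < m ∧ ∀ i, |(m : ℝ) * x i - (e i : ℝ)| < 1 / Q := by
    intro a b hlt hfab
    refine ⟨(b : ℕ) - (a : ℕ), fun i => ⌊((b : ℕ) : ℝ) * x i⌋ - ⌊((a : ℕ) : ℝ) * x i⌋,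
      by omega, fun i => ?_⟩
    have h2 : (f a i).val = (f b i).val := by rw [hfab]
    simp only [hf] at h2
    have hnn : ∀ (q : ℕ), 0 ≤ ⌊(Q : ℝ) * Int.fract ((q : ℝ) * x i)⌋ := by
      intro q
      exact Int.floor_nonneg.mpr (mul_nonneg (Nat.cast_nonneg Q) (Int.fract_nonneg _))
    have hfloor : ⌊(Q : ℝ) * Int.fract (((a : ℕ) : ℝ) * x i)⌋
        = ⌊(Q : ℝ) * Int.fract (((b : ℕ) : ℝ) * x i)⌋ := by
      have h3 := hnn (a : ℕ)
      have h4 := hnn (b : ℕ)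
      omega
    have habs : |(Q : ℝ) * Int.fract (((b : ℕ) : ℝ) * x i)
        - (Q : ℝ) * Int.fract (((a : ℕ) : ℝ) * x i)| < 1 :=
      floor_eq_abs_sub_lt_one hfloor.symm
    have hQR : (0 : ℝ) < (Q : ℝ) := by exact_mod_cast hQ
    have hexpr : (((b : ℕ) - (a : ℕ) : ℕ) : ℝ) * x i
        - ((⌊((b : ℕ) : ℝ) * x i⌋ - ⌊((a : ℕ) : ℝ) * x i⌋ : ℤ) : ℝ)
        = Int.fract (((b : ℕ) : ℝ) * x i) - Int.fract (((a : ℕ) : ℝ) * x i) := by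
      rw [Nat.cast_sub hlt.le]
      unfold Int.fract
      push_cast
      ring
    rw [hexpr]
    rw [← mul_sub, abs_mul, abs_of_pos hQR] at habs
    rw [lt_div_iff₀ hQR, mul_comm]
    exact habs
  rcases lt_or_gt_of_ne (fun h : (a : ℕ) = (b : ℕ) => hne (Fin.ext h)) with h | h
  · exact main a b h hab
  · exact main b a h hab.symm

private lemma symm_dot {N : ℕ} {G : Matrix (Fin N) (Fin N) ℝ} (hsymm : G.IsSymm)
    (a b : Fin N → ℝ) : a ⬝ᵥ G *ᵥ b = b ⬝ᵥ G *ᵥ a := by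
  rw [dotProduct_mulVec, ← mulVec_transpose, hsymm.eq, dotProduct_comm]

private lemma expand_quad {N : ℕ} {G : Matrix (Fin N) (Fin N) ℝ} (hsymm : G.IsSymm)
    (v y : Fin N → ℝ) (c : ℝ) :
    (v + c • y) ⬝ᵥ G *ᵥ (v + c • y)
      = v ⬝ᵥ G *ᵥ v + 2 * c * (v ⬝ᵥ G *ᵥ y) + c ^ 2 * (y ⬝ᵥ G *ᵥ y) := by
  have h := symm_dot hsymm y v
  simp only [mulVec_add, mulVec_smul, dotProduct_add, add_dotProduct, smul_dotProduct,
    dotProduct_smul, smul_eq_mul]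
  rw [h]
  ring

private lemma dot_bound {N : ℕ} (w v : Fin N → ℝ) (c : ℝ)
    (hv : ∀ i, |v i| ≤ c) : v ⬝ᵥ w ≤ (∑ i, |w i|) * c := by
  rw [dotProduct, Finset.sum_mul]
  apply Finset.sum_le_sum
  intro i _
  calc v i * w i ≤ |v i * w i| := le_abs_self _
    _ = |v i| * |w i| := abs_mul _ _
    _ ≤ c * |w i| := mul_le_mul_of_nonneg_right (hv i) (abs_nonneg _)
    _ = |w i| * c := mul_comm _ _

private lemma quad_bound {N : ℕ} (G : Matrix (Fin N) (Fin N) ℝ) (v : Fin N → ℝ) (c : ℝ)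
    (hc : 0 ≤ c) (hv : ∀ i, |v i| ≤ c) :
    v ⬝ᵥ G *ᵥ v ≤ (∑ i, ∑ j, |G i j|) * c ^ 2 := by
  rw [dotProduct, Finset.sum_mul]
  apply Finset.sum_le_sum
  intro i _
  rw [mulVec, dotProduct, Finset.mul_sum, Finset.sum_mul]
  apply Finset.sum_le_sum
  intro j _
  calc v i * (G i j * v j) ≤ |v i * (G i j * v j)| := le_abs_self _
    _ = |v i| * |G i j| * |v j| := by rw [abs_mul, abs_mul]; ring
    _ ≤ c * |G i j| * c := by
        have h1 : |v i| * |G i j| ≤ c * |G i j| :=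
          mul_le_mul_of_nonneg_right (hv i) (abs_nonneg _)
        have h2 : 0 ≤ c * |G i j| := mul_nonneg hc (abs_nonneg _)
        calc |v i| * |G i j| * |v j| ≤ c * |G i j| * |v j| :=
              mul_le_mul_of_nonneg_right h1 (abs_nonneg _)
          _ ≤ c * |G i j| * c := mul_le_mul_of_nonneg_left (hv j) h2
    _ = |G i j| * c ^ 2 := by ring

/-- every matrix in the Ryshkov polytope `R_λ` (with `λ > 0`) is
positive definite: if `G` is real symmetric with `eᵀGe ≥ λ` for all nonzero
integer vectors `e`, then `xᵀGx > 0` for all nonzero real vectors `x`. -/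
theorem ryshkov_posdef (N : ℕ) (lam : ℝ) (hlam : 0 < lam)
    (G : Matrix (Fin N) (Fin N) ℝ) (hsymm : G.IsSymm)
    (hG : ∀ e : Fin N → ℤ, e ≠ 0 → lam ≤ intQuadForm G e) :
    ∀ x : Fin N → ℝ, x ≠ 0 → 0 < x ⬝ᵥ G.mulVec x := by
  set S : ℝ := ∑ i, ∑ j, |G i j| with hS
  have hS0 : 0 ≤ S := Finset.sum_nonneg fun i _ => Finset.sum_nonneg fun j _ => abs_nonneg _
  -- Step A: the quadratic form is nonnegative on all of ℝ^N.
  have hpsd : ∀ y : Fin N → ℝ, 0 ≤ y ⬝ᵥ G *ᵥ y := by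
    intro y
    by_contra hneg
    push_neg at hneg
    set ε : ℝ := -(y ⬝ᵥ G *ᵥ y) with hε
    have hε0 : 0 < ε := by simp only [hε]; linarith
    set A : ℝ := ∑ i, |(G *ᵥ y) i| with hA
    have hA0 : 0 ≤ A := Finset.sum_nonneg fun i _ => abs_nonneg _
    obtain ⟨Q, hQgt⟩ := exists_nat_gt (max 1 ((2 * A + S) / ε))
    have hQ1 : (1 : ℝ) ≤ (Q : ℝ) := le_of_lt (lt_of_le_of_lt (le_max_left _ _) hQgt)
    have hQ0 : 0 < Q := by exact_mod_cast lt_of_lt_of_le zero_lt_one hQ1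
    have hQR : (0 : ℝ) < (Q : ℝ) := by exact_mod_cast hQ0
    have hQinv : (0 : ℝ) < 1 / Q := by positivity
    have hQε : (2 * A + S) / ε < (Q : ℝ) := lt_of_le_of_lt (le_max_right _ _) hQgt
    obtain ⟨m, e, hm, he⟩ := simul_dirichlet y Q hQ0
    have hm1 : (1 : ℝ) ≤ (m : ℝ) := by exact_mod_cast hm
    set v : Fin N → ℝ := fun i => (e i : ℝ) - (m : ℝ) * y i with hv
    have hvb : ∀ i, |v i| ≤ 1 / Q := by
      intro i
      rw [hv]
      rw [abs_sub_comm]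
      exact le_of_lt (he i)
    have hEv : (fun i => (e i : ℝ)) = v + (m : ℝ) • y := by
      funext i
      simp [hv]
    have hquad : (fun i => (e i : ℝ)) ⬝ᵥ G *ᵥ (fun i => (e i : ℝ))
        = v ⬝ᵥ G *ᵥ v + 2 * (m : ℝ) * (v ⬝ᵥ G *ᵥ y) + (m : ℝ) ^ 2 * (y ⬝ᵥ G *ᵥ y) := by
      rw [hEv]; exact expand_quad hsymm v y (m : ℝ)
    have hq1 : v ⬝ᵥ G *ᵥ v ≤ S * (1 / Q) ^ 2 := quad_bound G v (1 / Q) (by positivity) hvb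
    have hq2 : v ⬝ᵥ (G *ᵥ y) ≤ A * (1 / Q) := dot_bound (G *ᵥ y) v (1 / Q) hvb
    have hqy : y ⬝ᵥ G *ᵥ y = -ε := by simp only [hε, neg_neg]
    clear_value S ε A v
    have hone : (1 / (Q : ℝ)) ≤ 1 := by rw [div_le_one hQR]; exact hQ1
    have hsq : (1 / (Q : ℝ)) ^ 2 ≤ 1 / Q := by nlinarith
    have h1' : v ⬝ᵥ G *ᵥ v ≤ S * (1 / Q) := by
      have := mul_le_mul_of_nonneg_left hsq hS0
      linarith
    -- (2A + S)/Q < ε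
    have hbound : 2 * (A * (1 / (Q : ℝ))) + S * (1 / Q) < ε := by
      rw [div_lt_iff₀ hε0] at hQε
      calc 2 * (A * (1 / (Q : ℝ))) + S * (1 / Q) = (2 * A + S) * (1 / Q) := by ring
        _ < ((Q : ℝ) * ε) * (1 / Q) := mul_lt_mul_of_pos_right hQε hQinv
        _ = ε := by field_simp
    have h3 : 2 * (A * (1 / (Q : ℝ))) ≤ ε := by
      linarith [mul_nonneg hS0 hQinv.le]
    have hstep : 2 * (m : ℝ) * (A * (1 / Q)) + (m : ℝ) ^ 2 * (-ε)
        ≤ 2 * (A * (1 / Q)) + -ε := by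
      have h5 : ((m : ℝ) - 1) * (2 * (A * (1 / Q))) ≤ ((m : ℝ) - 1) * ε :=
        mul_le_mul_of_nonneg_left h3 (by linarith)
      have h6 : 0 ≤ ε * ((m : ℝ) ^ 2 - m) := mul_nonneg hε0.le (by nlinarith)
      linarith [h5, h6]
    have hcross : 2 * (m : ℝ) * (v ⬝ᵥ G *ᵥ y) ≤ 2 * (m : ℝ) * (A * (1 / Q)) :=
      mul_le_mul_of_nonneg_left hq2 (by positivity)
    have hkey : (fun i => (e i : ℝ)) ⬝ᵥ G *ᵥ (fun i => (e i : ℝ)) < 0 := by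
      rw [hquad, hqy]
      linarith
    by_cases he0 : e = 0
    · rw [he0] at hkey
      simp at hkey
    · have := hG e he0
      rw [intQuadForm] at this
      linarith
  -- Step B: positive definiteness.
  intro x hx
  rcases lt_or_eq_of_le (hpsd x) with h | h
  · exact h
  -- h : 0 = x ⬝ᵥ G *ᵥ x ; derive contradiction
  exfalso
  have hherm : G.IsHermitian := by
    rw [Matrix.IsHermitian, conjTranspose_eq_transpose_of_trivial]
    exact hsymm
  have hpsdM : G.PosSemidef := PosSemidef.of_dotProduct_mulVec_nonneg hherm fun y => by simpa using hpsd y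
  have hker : G *ᵥ x = 0 := by
    apply (hpsdM.dotProduct_mulVec_zero_iff x).mp
    simp only [star_trivial]
    exact h.symm
  obtain ⟨i0, hi0⟩ := Function.ne_iff.mp hx
  have hxi0 : 0 < |x i0| := abs_pos.mpr hi0
  obtain ⟨Q, hQgt⟩ := exists_nat_gt (max 1 (max (S / lam) (1 / |x i0|)))
  have hQ1 : (1 : ℝ) ≤ (Q : ℝ) := le_of_lt (lt_of_le_of_lt (le_max_left _ _) hQgt)
  have hQ0 : 0 < Q := by exact_mod_cast lt_of_lt_of_le zero_lt_one hQ1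
  have hQR : (0 : ℝ) < (Q : ℝ) := by exact_mod_cast hQ0
  have hQS : S / lam < (Q : ℝ) :=
    lt_of_le_of_lt (le_trans (le_max_left _ _) (le_max_right _ _)) hQgt
  have hQx : 1 / |x i0| < (Q : ℝ) :=
    lt_of_le_of_lt (le_trans (le_max_right _ _) (le_max_right _ _)) hQgt
  obtain ⟨m, e, hm, he⟩ := simul_dirichlet x Q hQ0
  have hm1 : (1 : ℝ) ≤ (m : ℝ) := by exact_mod_cast hm
  set v : Fin N → ℝ := fun i => (e i : ℝ) - (m : ℝ) * x i with hv
  have hvb : ∀ i, |v i| ≤ 1 / Q := by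
    intro i
    rw [hv, abs_sub_comm]
    exact le_of_lt (he i)
  have hEv : (fun i => (e i : ℝ)) = v + (m : ℝ) • x := by
    funext i
    simp [hv]
  -- e ≠ 0
  have he0 : e ≠ 0 := by
    intro h0
    have h1 := he i0
    rw [h0] at h1
    simp only [Pi.zero_apply, Int.cast_zero, sub_zero, abs_mul, Nat.abs_cast] at h1
    have h2 : |x i0| ≤ (m : ℝ) * |x i0| := le_mul_of_one_le_left (abs_nonneg _) hm1
    have hQxi : 1 / (Q : ℝ) < |x i0| := by
      rw [div_lt_iff₀ hQR]
      rw [div_lt_iff₀ hxi0] at hQx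
      linarith
    linarith
  -- the quadratic form at e equals the form at v, which is small
  have hquad : (fun i => (e i : ℝ)) ⬝ᵥ G *ᵥ (fun i => (e i : ℝ)) = v ⬝ᵥ G *ᵥ v := by
    rw [hEv, expand_quad hsymm v x (m : ℝ), ← h]
    have hvx : v ⬝ᵥ (G *ᵥ x) = 0 := by rw [hker, dotProduct_zero]
    rw [hvx]
    ring
  have hq1 : v ⬝ᵥ G *ᵥ v ≤ S * (1 / Q) ^ 2 := quad_bound G v (1 / Q) (by positivity) hvb
  clear_value S v
  have hsmall : S * (1 / (Q : ℝ)) ^ 2 < lam := by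
    rw [div_lt_iff₀ hlam] at hQS
    have hQQ : (Q : ℝ) ≤ (Q : ℝ) ^ 2 := by nlinarith
    have hS2 : S < (Q : ℝ) ^ 2 * lam := by nlinarith
    rw [div_pow, one_pow, mul_one_div, div_lt_iff₀ (by positivity : (0 : ℝ) < (Q : ℝ) ^ 2)]
    nlinarith [hS2]
  have hlow := hG e he0
  rw [intQuadForm] at hlow
  rw [hquad] at hlow
  linarith
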